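/- Let U be a locally compact metric space, m a natural number, E = EuclideanSpace ℝ (Fin m), c ∈ E and R > 0, and set B = Metric.ball c R. Let f : ℕ → U → E and g : U → E be such that each f j and g is continuous, is an open map (IsOpenMap), and takes all its values in B. Assume the maps converge continuously to g: for every x ∈ U and every sequence u : ℕ → U with u tending to x, the sequence j ↦ f j (u j) tends to g x. Let p ∈ B be such that the preimage C = g ⁻¹' {p} is nonempty and compact. Then for all sufficiently large j, the preimage (f j) ⁻¹' {p} is nonempty. -/

import Mathlib

open Filter Topology

lemma aux_boundary {U : Type*} [TopologicalSpace U] {m : ℕ}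
    (f : U → EuclideanSpace ℝ (Fin m)) (hc : Continuous f) (ho : IsOpenMap f)
    {K : Set U} (hK : IsCompact K) {x₀ : U} (hx₀ : x₀ ∈ K)
    {p : EuclideanSpace ℝ (Fin m)} (hp : ∀ x, f x ≠ p) :
    ∃ x ∈ K \ interior K, dist (f x) p ≤ dist (f x₀) p := by
  have himg : IsCompact (f '' K) := hK.image hc
  obtain ⟨q, hqmem, hqmin⟩ := himg.exists_isMinOn (f := fun y => dist y p)
    ⟨f x₀, ⟨x₀, hx₀, rfl⟩⟩ (continuous_id.dist continuous_const).continuousOn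
  obtain ⟨x, hxK, hxq⟩ := hqmem
  subst hxq
  have hxint : x ∉ interior K := by
    intro hxint
    have hO : IsOpen (f '' interior K) := ho _ isOpen_interior
    have hqO : f x ∈ f '' interior K := ⟨x, hxint, rfl⟩
    obtain ⟨δ, hδ, hball⟩ := Metric.isOpen_iff.1 hO _ hqO
    have hqppos : 0 < dist (f x) p := dist_pos.2 (hp x)
    set t : ℝ := min (δ / (2 * dist (f x) p)) 1 with ht
    have ht0 : 0 < t := lt_min (by positivity) one_pos
    have ht1 : t ≤ 1 := min_le_right _ _
    set q' := AffineMap.lineMap (f x) p t with hq'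
    have hd1 : dist q' (f x) = |t| * dist (f x) p := by
      rw [hq', dist_lineMap_left, Real.norm_eq_abs]
    have hd2 : dist q' p = |1 - t| * dist (f x) p := by
      rw [hq', dist_lineMap_right, Real.norm_eq_abs]
    have hq'ball : q' ∈ Metric.ball (f x) δ := by
      rw [Metric.mem_ball, hd1, abs_of_pos ht0]
      calc t * dist (f x) p ≤ (δ / (2 * dist (f x) p)) * dist (f x) p := by
            apply mul_le_mul_of_nonneg_right (min_le_left _ _) dist_nonneg
        _ = δ / 2 := by field_simp
        _ < δ := by linarith
    have hq'img : q' ∈ f '' K :=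
      Set.image_mono (f := f) interior_subset (hball hq'ball)
    have hmin := hqmin hq'img
    simp only [Set.mem_setOf_eq] at hmin
    rw [hd2, abs_of_nonneg (by linarith)] at hmin
    nlinarith
  exact ⟨x, ⟨hxK, hxint⟩, hqmin ⟨x₀, hx₀, rfl⟩⟩

/-- A Hurwitz-type theorem for open maps: if continuous open maps `f j` with
values in a Euclidean ball converge continuously to a continuous open map `g`,
and the fiber of `g` over `p` is nonempty and compact, then the fibers of the
`f j` over `p` are eventually nonempty. -/
theorem open_maps_eventually_surjective_at_point
    {U : Type*} [MetricSpace U] [LocallyCompactSpace U]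
    (m : ℕ) (c : EuclideanSpace ℝ (Fin m)) (R : ℝ) (hR : 0 < R)
    (B : Set (EuclideanSpace ℝ (Fin m))) (hB : B = Metric.ball c R)
    (f : ℕ → U → EuclideanSpace ℝ (Fin m)) (g : U → EuclideanSpace ℝ (Fin m))
    (hfc : ∀ j, Continuous (f j)) (hfo : ∀ j, IsOpenMap (f j))
    (hfB : ∀ j, ∀ x, f j x ∈ B)
    (hgc : Continuous g) (hgo : IsOpenMap g) (hgB : ∀ x, g x ∈ B)
    (hconv : ∀ (x : U) (u : ℕ → U), Tendsto u atTop (𝓝 x) →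
      Tendsto (fun j => f j (u j)) atTop (𝓝 (g x)))
    (p : EuclideanSpace ℝ (Fin m)) (hp : p ∈ B)
    (hCne : (g ⁻¹' {p}).Nonempty) (hCcpt : IsCompact (g ⁻¹' {p})) :
    ∀ᶠ j in atTop, ((f j) ⁻¹' {p}).Nonempty := by
  by_contra h
  rw [Filter.not_eventually] at h
  obtain ⟨φ, hφ, hφempty⟩ := Filter.extraction_of_frequently_atTop h
  -- compact superset K of the fiber C, with C ⊆ interior K
  obtain ⟨K, hKc, hCK⟩ := exists_compact_superset hCcpt
  obtain ⟨x₀, hx₀C⟩ := hCne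
  have hx₀K : x₀ ∈ K := interior_subset (hCK hx₀C)
  have hgx₀ : g x₀ = p := hx₀C
  -- for each k, a boundary point where f (φ k) is at least as close to p as at x₀
  have hstep : ∀ k, ∃ x ∈ K \ interior K,
      dist (f (φ k) x) p ≤ dist (f (φ k) x₀) p := by
    intro k
    have hne : ∀ x, f (φ k) x ≠ p := by
      intro x hx
      exact (hφempty k) ⟨x, hx⟩
    exact aux_boundary (f (φ k)) (hfc (φ k)) (hfo (φ k)) hKc hx₀K hne
  choose xx hxxmem hxxdist using hstep
  -- boundary is compact; extract convergent subsequence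
  have hbd : IsCompact (K \ interior K) := by
    rw [Set.diff_eq]
    exact hKc.inter_right isOpen_interior.isClosed_compl
  obtain ⟨x, hxmem, ψ, hψ, hxxconv⟩ := hbd.tendsto_subseq hxxmem
  set σ : ℕ → ℕ := φ ∘ ψ with hσ
  have hσmono : StrictMono σ := hφ.comp hψ
  -- define the sequence u
  classical
  set u : ℕ → U := fun j => if h : ∃ l, σ l = j then xx (ψ h.choose) else x with hu
  have huσ : ∀ l, u (σ l) = xx (ψ l) := by
    intro l
    have h : ∃ l', σ l' = σ l := ⟨l, rfl⟩
    have : h.choose = l := hσmono.injective h.choose_spec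
    simp only [hu, dif_pos h, this]
  have hutend : Tendsto u atTop (𝓝 x) := by
    rw [Metric.tendsto_atTop]
    intro ε hε
    rw [Metric.tendsto_atTop] at hxxconv
    obtain ⟨N, hN⟩ := hxxconv ε hε
    refine ⟨σ N, fun j hj => ?_⟩
    by_cases h : ∃ l, σ l = j
    · have hchoose := h.choose_spec
      have hl : N ≤ h.choose := by
        by_contra hlt
        push_neg at hlt
        exact absurd (hchoose ▸ hσmono hlt) (by omega)
      simp only [hu, dif_pos h]
      exact hN h.choose hl
    · simp only [hu, dif_neg h]
      simpa using hε
  -- limit along σ of f (σ l) (xx (ψ l)) is g x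
  have h1 : Tendsto (fun l => f (σ l) (xx (ψ l))) atTop (𝓝 (g x)) := by
    have h0 := (hconv x u hutend).comp hσmono.tendsto_atTop
    apply h0.congr
    intro l
    show f (σ l) (u (σ l)) = f (σ l) (xx (ψ l))
    rw [huσ]
  -- but it also tends to p
  have h2 : Tendsto (fun l => f (σ l) (xx (ψ l))) atTop (𝓝 p) := by
    have hfx₀ : Tendsto (fun j => f j x₀) atTop (𝓝 p) := by
      have := hconv x₀ (fun _ => x₀) tendsto_const_nhds
      rwa [hgx₀] at this
    have hfx₀σ : Tendsto (fun l => f (σ l) x₀) atTop (𝓝 p) :=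
      hfx₀.comp hσmono.tendsto_atTop
    rw [tendsto_iff_dist_tendsto_zero]
    refine squeeze_zero (fun l => dist_nonneg) (fun l => hxxdist (ψ l)) ?_
    exact tendsto_iff_dist_tendsto_zero.1 hfx₀σ
  have hgxp : g x = p := tendsto_nhds_unique h1 h2
  exact hxmem.2 (hCK hgxp)
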